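/- The Fourier coefficients of log|T'_{α,β}| on [-1,1] are 𝓕[0] = log(α(1+β)) - (α-1) and, for j ≠ 0, 𝓕[j] = -((α-1)/(|j|π)) ∫_0^{|j|π} (sin x)/x dx. -/

import Mathlib

open Real MeasureTheory

open intervalIntegral Set Filter Topology


lemma log_intInt : IntervalIntegrable Real.log volume 0 1 := by
  have hg : IntervalIntegrable (fun x : ℝ => 2 * x ^ (-(1/2) : ℝ)) volume 0 1 :=
    (intervalIntegrable_rpow' (by norm_num)).const_mul 2
  rw [intervalIntegrable_iff] at hg ⊢
  refine hg.mono' Real.measurable_log.aestronglyMeasurable ?_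
  filter_upwards [ae_restrict_mem measurableSet_uIoc] with x hx
  rw [Set.uIoc_of_le (by norm_num : (0:ℝ) ≤ 1)] at hx
  obtain ⟨hx0, hx1⟩ := hx
  have hlog : Real.log x ≤ 0 := Real.log_nonpos hx0.le hx1
  have h2 : -Real.log x ≤ 2 * x ^ (-(1/2) : ℝ) := by
    have h3 : Real.log (x ^ (-(1/2) : ℝ)) ≤ x ^ (-(1/2) : ℝ) - 1 :=
      Real.log_le_sub_one_of_pos (Real.rpow_pos_of_pos hx0 _)
    rw [Real.log_rpow hx0] at h3
    nlinarith [Real.rpow_pos_of_pos hx0 (-(1/2) : ℝ)]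
  have hpos : (0:ℝ) ≤ 2 * x ^ (-(1/2) : ℝ) := by positivity
  rw [Real.norm_eq_abs, abs_of_nonpos hlog]
  exact h2

lemma log_intInt' : IntervalIntegrable Real.log volume (-1) 1 := by
  have h2 : IntervalIntegrable Real.log volume (-1) 0 := by
    have := ((IntervalIntegrable.iff_comp_neg (a := 0) (b := 1) (f := Real.log)).mp log_intInt)
    simp only [neg_zero] at this
    have : IntervalIntegrable (fun x : ℝ => Real.log x) volume 0 (-1) := by
      refine this.congr ?_
      intro x _
      exact Real.log_neg_eq_log x
    exact this.symm
  exact h2.trans log_intInt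

lemma sinc_intInt (c d : ℝ) : IntervalIntegrable (fun u => Real.sin u / u) volume c d := by
  rw [intervalIntegrable_iff]
  apply Measure.integrableOn_of_bounded (M := 1) (by exact (measure_Ioc_lt_top).ne)
    (Real.measurable_sin.div measurable_id).aestronglyMeasurable
  filter_upwards with u
  rw [Real.norm_eq_abs, Pi.div_apply, id_eq, abs_div]
  rcases eq_or_ne u 0 with rfl | hu
  · simp
  · exact div_le_one_of_le₀ Real.abs_sin_le_abs (abs_nonneg _)

open Filter Topology intervalIntegral in
lemma tendsto_head {f : ℝ → ℝ} {b : ℝ} (hb : 0 < b)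
    (hf : IntervalIntegrable f volume 0 b) :
    Tendsto (fun ε => ∫ x in (0:ℝ)..ε, f x) (𝓝[>] 0) (𝓝 0) := by
  have hc := intervalIntegral.continuousOn_primitive_interval' hf
    (a := 0) Set.left_mem_uIcc
  have h0 : ContinuousWithinAt (fun t => ∫ x in (0:ℝ)..t, f x) (Set.uIcc 0 b) 0 :=
    hc 0 Set.left_mem_uIcc
  have h0' : Tendsto (fun t => ∫ x in (0:ℝ)..t, f x) (𝓝[>] 0) (𝓝 (∫ x in (0:ℝ)..(0:ℝ), f x)) := by
    refine h0.tendsto.mono_left ?_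
    rw [Set.uIcc_of_le hb.le, ← nhdsWithin_Ioc_eq_nhdsGT hb]
    exact nhdsWithin_mono _ Set.Ioc_subset_Icc_self
  simpa using h0'

open Filter Topology intervalIntegral in
lemma tendsto_tail {f : ℝ → ℝ} {b : ℝ} (hb : 0 < b)
    (hf : IntervalIntegrable f volume 0 b) :
    Tendsto (fun ε => ∫ x in ε..b, f x) (𝓝[>] 0)
      (𝓝 (∫ x in (0:ℝ)..b, f x)) := by
  have heq : ∀ ε ∈ Set.Ioc (0:ℝ) b,
      ∫ x in ε..b, f x = (∫ x in (0:ℝ)..b, f x) - ∫ x in (0:ℝ)..ε, f x := by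
    intro ε hε
    have hsub : IntervalIntegrable f volume 0 ε :=
      hf.mono_set (Set.uIcc_subset_uIcc Set.left_mem_uIcc
        (by rw [Set.uIcc_of_le hb.le]; exact ⟨hε.1.le, hε.2⟩))
    rw [intervalIntegral.integral_interval_sub_left hf hsub]
  have hlim : Tendsto (fun ε => (∫ x in (0:ℝ)..b, f x) - ∫ x in (0:ℝ)..ε, f x)
      (𝓝[>] 0) (𝓝 (∫ x in (0:ℝ)..b, f x)) := by
    simpa using tendsto_const_nhds.sub (tendsto_head hb hf)
  refine hlim.congr' ?_
  filter_upwards [Ioc_mem_nhdsGT_of_mem ⟨le_refl (0:ℝ), hb⟩] with ε hε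
  exact (heq ε hε).symm

open Filter Topology intervalIntegral in
lemma key_ibp {a : ℝ} (ha : 0 < a) {ε : ℝ} (hε : ε ∈ Set.Ioo (0:ℝ) 1) :
    ∫ x in ε..1, Real.log x * Real.cos (a*x)
      = -(Real.log ε * (Real.sin (a*ε)/a))
        - a⁻¹ * ∫ u in (a*ε)..(a*1), Real.sin u / u := by
  have hε0 := hε.1
  have hib : ∫ x in ε..1, Real.log x * Real.cos (a*x)
      = Real.log 1 * (Real.sin (a*1)/a) - Real.log ε * (Real.sin (a*ε)/a)
        - ∫ x in ε..1, x⁻¹ * (Real.sin (a*x)/a) := by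
    apply intervalIntegral.integral_mul_deriv_eq_deriv_mul
      (u := Real.log) (v := fun x => Real.sin (a*x)/a)
      (u' := fun x => x⁻¹) (v' := fun x => Real.cos (a*x))
    · intro x hx
      rw [Set.uIcc_of_le hε.2.le] at hx
      exact Real.hasDerivAt_log (lt_of_lt_of_le hε0 hx.1).ne'
    · intro x hx
      have h1 : HasDerivAt (fun x : ℝ => a * x) a x := by
        simpa using (hasDerivAt_id x).const_mul a
      have h2 := ((Real.hasDerivAt_sin (a*x)).comp x h1).div_const a
      convert h2 using 1
      · rfl
      · rw [mul_div_assoc, div_self ha.ne', mul_one]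
    · apply ContinuousOn.intervalIntegrable
      apply ContinuousOn.inv₀ continuousOn_id
      intro x hx
      rw [Set.uIcc_of_le hε.2.le] at hx
      exact (lt_of_lt_of_le hε0 hx.1).ne'
    · exact (Continuous.intervalIntegrable (by continuity) _ _)
  rw [hib, Real.log_one, zero_mul, zero_sub]
  congr 1
  have hcong : ∫ x in ε..1, x⁻¹ * (Real.sin (a*x)/a)
      = ∫ x in ε..1, (fun u => Real.sin u / u) (a*x) := by
    apply intervalIntegral.integral_congr
    intro x hx
    rw [Set.uIcc_of_le hε.2.le] at hx
    have hx0 : x ≠ 0 := (lt_of_lt_of_le hε0 hx.1).ne'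
    field_simp
  rw [hcong, intervalIntegral.integral_comp_mul_left (fun u => Real.sin u / u) ha.ne',
    smul_eq_mul]

open Filter Topology intervalIntegral in
lemma key_int {a : ℝ} (ha : 0 < a) :
    ∫ x in (0:ℝ)..1, Real.log x * Real.cos (a*x)
      = -(1/a) * ∫ u in (0:ℝ)..a, Real.sin u / u := by
  have hlc : IntervalIntegrable (fun x => Real.log x * Real.cos (a*x)) volume 0 1 :=
    log_intInt.mul_continuousOn (Continuous.continuousOn (by continuity))
  -- limit of LHS tails
  have hF : Tendsto (fun ε => ∫ x in ε..1, Real.log x * Real.cos (a*x)) (𝓝[>] 0)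
      (𝓝 (∫ x in (0:ℝ)..1, Real.log x * Real.cos (a*x))) := tendsto_tail one_pos hlc
  -- limit of boundary term
  have hB : Tendsto (fun ε => Real.log ε * (Real.sin (a*ε)/a)) (𝓝[>] 0) (𝓝 0) := by
    have hg : Tendsto (fun ε : ℝ => |Real.log ε * ε|) (𝓝[>] 0) (𝓝 0) := by
      have h := tendsto_log_mul_rpow_nhdsGT_zero one_pos
      simp only [Real.rpow_one] at h
      simpa using h.abs
    apply squeeze_zero_norm' _ hg
    filter_upwards [self_mem_nhdsWithin] with ε (hε : 0 < ε)
    rw [Real.norm_eq_abs, abs_mul, abs_div, abs_mul, abs_of_pos ha, abs_of_pos hε]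
    have hsin : |Real.sin (a*ε)| ≤ a * ε := by
      have := Real.abs_sin_le_abs (x := a*ε)
      rwa [abs_of_pos (mul_pos ha hε)] at this
    calc |Real.log ε| * (|Real.sin (a*ε)| / a)
        ≤ |Real.log ε| * ((a*ε) / a) := by
          gcongr
      _ = |Real.log ε| * ε := by field_simp
  -- limit of the substituted integral
  have hG : Tendsto (fun ε => a⁻¹ * ∫ u in (a*ε)..(a*1), Real.sin u / u) (𝓝[>] 0)
      (𝓝 (a⁻¹ * ∫ u in (0:ℝ)..a, Real.sin u / u)) := by
    have hmul : Tendsto (fun ε : ℝ => a * ε) (𝓝[>] 0) (𝓝[>] 0) := by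
      apply tendsto_nhdsWithin_of_tendsto_nhds_of_eventually_within
      · have : Tendsto (fun ε : ℝ => ε) (𝓝[>] 0) (𝓝 0) :=
          tendsto_id.mono_left nhdsWithin_le_nhds
        simpa using (tendsto_const_nhds (x := a)).mul this
      · filter_upwards [self_mem_nhdsWithin] with ε (hε : 0 < ε)
        exact mul_pos ha hε
    have htail : Tendsto (fun t => ∫ u in t..a, Real.sin u / u) (𝓝[>] 0)
        (𝓝 (∫ u in (0:ℝ)..a, Real.sin u / u)) := tendsto_tail ha (sinc_intInt 0 a)
    have := (htail.comp hmul).const_mul a⁻¹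
    simpa [Function.comp, mul_one] using this
  -- combine
  have hRHS : Tendsto (fun ε => -(Real.log ε * (Real.sin (a*ε)/a))
      - a⁻¹ * ∫ u in (a*ε)..(a*1), Real.sin u / u) (𝓝[>] 0)
      (𝓝 (-(1/a) * ∫ u in (0:ℝ)..a, Real.sin u / u)) := by
    have := (hB.neg).sub hG
    simpa [one_div, neg_zero, zero_sub, neg_mul] using this
  have heq : (fun ε => ∫ x in ε..1, Real.log x * Real.cos (a*x)) =ᶠ[𝓝[>] 0]
      (fun ε => -(Real.log ε * (Real.sin (a*ε)/a))
        - a⁻¹ * ∫ u in (a*ε)..(a*1), Real.sin u / u) := by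
    filter_upwards [Ioo_mem_nhdsGT_of_mem ⟨le_refl (0:ℝ), one_pos⟩] with ε hε
    exact key_ibp ha hε
  exact tendsto_nhds_unique hF (hRHS.congr' heq.symm)

open Filter Topology intervalIntegral in
lemma int_log01 : ∫ x in (0:ℝ)..1, Real.log x = -1 := by
  have hF : Tendsto (fun ε => ∫ x in ε..1, Real.log x) (𝓝[>] 0)
      (𝓝 (∫ x in (0:ℝ)..1, Real.log x)) := tendsto_tail one_pos log_intInt
  have hRHS : Tendsto (fun ε : ℝ => 1 * Real.log 1 - ε * Real.log ε - 1 + ε) (𝓝[>] 0)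
      (𝓝 (-1)) := by
    have h1 : Tendsto (fun ε : ℝ => ε * Real.log ε) (𝓝[>] 0) (𝓝 0) := by
      have h := tendsto_log_mul_rpow_nhdsGT_zero one_pos
      simp only [Real.rpow_one] at h
      exact h.congr (fun ε => mul_comm _ _)
    have h2 : Tendsto (fun ε : ℝ => ε) (𝓝[>] 0) (𝓝 0) :=
      tendsto_id.mono_left nhdsWithin_le_nhds
    have := ((tendsto_const_nhds (x := (1:ℝ) * Real.log 1)).sub h1).sub
      (tendsto_const_nhds (x := (1:ℝ))) |>.add h2
    simpa using this
  have heq : (fun ε => ∫ x in ε..1, Real.log x) =ᶠ[𝓝[>] 0]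
      (fun ε : ℝ => 1 * Real.log 1 - ε * Real.log ε - 1 + ε) := by
    filter_upwards [Ioo_mem_nhdsGT_of_mem ⟨le_refl (0:ℝ), one_pos⟩] with ε hε
    exact integral_log
  exact tendsto_nhds_unique hF (hRHS.congr' heq.symm)

open intervalIntegral in
lemma even_int {f : ℝ → ℝ} (h : ∀ x, f (-x) = f x)
    (hi : IntervalIntegrable f volume (-1) 1) :
    ∫ x in (-1:ℝ)..1, f x = 2 * ∫ x in (0:ℝ)..1, f x := by
  have h1 : IntervalIntegrable f volume (-1) 0 :=
    hi.mono_set (Set.uIcc_subset_uIcc Set.left_mem_uIcc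
      (by rw [Set.uIcc_of_le (by norm_num : (-1:ℝ) ≤ 1)]; norm_num))
  have h2 : IntervalIntegrable f volume 0 1 :=
    hi.mono_set (Set.uIcc_subset_uIcc
      (by rw [Set.uIcc_of_le (by norm_num : (-1:ℝ) ≤ 1)]; norm_num) Set.right_mem_uIcc)
  have hneg : ∫ x in (-1:ℝ)..0, f x = ∫ x in (0:ℝ)..1, f x := by
    have := intervalIntegral.integral_comp_neg (a := (0:ℝ)) (b := 1) f
    simp only [neg_zero] at this
    rw [← this]
    exact intervalIntegral.integral_congr (fun x _ => (h x).symm) |>.symm ▸ rfl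
  rw [← intervalIntegral.integral_add_adjacent_intervals h1 h2, hneg]
  ring

open intervalIntegral in
lemma odd_int {f : ℝ → ℝ} (h : ∀ x, f (-x) = -f x)
    (hi : IntervalIntegrable f volume (-1) 1) :
    ∫ x in (-1:ℝ)..1, f x = 0 := by
  have h1 : IntervalIntegrable f volume (-1) 0 :=
    hi.mono_set (Set.uIcc_subset_uIcc Set.left_mem_uIcc
      (by rw [Set.uIcc_of_le (by norm_num : (-1:ℝ) ≤ 1)]; norm_num))
  have h2 : IntervalIntegrable f volume 0 1 :=
    hi.mono_set (Set.uIcc_subset_uIcc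
      (by rw [Set.uIcc_of_le (by norm_num : (-1:ℝ) ≤ 1)]; norm_num) Set.right_mem_uIcc)
  have hneg : ∫ x in (-1:ℝ)..0, f x = -∫ x in (0:ℝ)..1, f x := by
    have := intervalIntegral.integral_comp_neg (a := (0:ℝ)) (b := 1) f
    simp only [neg_zero] at this
    rw [← this, ← intervalIntegral.integral_neg]
    exact intervalIntegral.integral_congr (fun x _ => by rw [h x])
  rw [← intervalIntegral.integral_add_adjacent_intervals h1 h2, hneg]
  ring

lemma IntervalIntegrable.ofReal' {f : ℝ → ℝ} {a b : ℝ}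
    (h : IntervalIntegrable f volume a b) :
    IntervalIntegrable (fun x => (f x : ℂ)) volume a b :=
  ⟨h.1.ofReal, h.2.ofReal⟩

/-- Fourier coefficient on `[-1,1]` of a real-valued function. -/
noncomputable def Fc (f : ℝ → ℝ) (j : ℤ) : ℂ :=
  (1 / 2) * ∫ x in Set.Icc (-1 : ℝ) 1, (f x : ℂ) * Complex.exp (-(j * π * Complex.I * x))

theorem fourier_coeffs_of_log_deriv (α β : ℝ) (hα : 1 ≤ α) (hβ : β ∈ Set.Ioc (-1 : ℝ) 1) :
    Fc (fun x => Real.log (α * (1 + β)) + (α - 1) * Real.log |x|) 0 =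
      ((Real.log (α * (1 + β)) - (α - 1) : ℝ) : ℂ) ∧
    ∀ j : ℤ, j ≠ 0 →
      Fc (fun x => Real.log (α * (1 + β)) + (α - 1) * Real.log |x|) j =
        ((-((α - 1) / (|(j : ℝ)| * π)) * ∫ x in (0 : ℝ)..(|(j : ℝ)| * π),
            Real.sin x / x : ℝ) : ℂ) := by
  set c := Real.log (α * (1 + β)) with hc
  set k := α - 1 with hk
  have hfabs : (fun x : ℝ => c + k * Real.log |x|) = fun x => c + k * Real.log x := by
    funext x; rw [Real.log_abs]
  have hIcc : ∀ g : ℝ → ℂ, ∫ x in Set.Icc (-1:ℝ) 1, g x = ∫ x in (-1:ℝ)..1, g x := by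
    intro g
    rw [intervalIntegral.integral_of_le (by norm_num : (-1:ℝ) ≤ 1),
      MeasureTheory.integral_Icc_eq_integral_Ioc]
  have hf_int : IntervalIntegrable (fun x => c + k * Real.log x) volume (-1) 1 :=
    (_root_.intervalIntegrable_const).add (log_intInt'.const_mul k)
  constructor
  · rw [Fc]
    simp only [Int.cast_zero, zero_mul, neg_zero, Complex.exp_zero, mul_one]
    simp only [Real.log_abs]
    rw [hIcc, intervalIntegral.integral_ofReal]
    rw [intervalIntegral.integral_add _root_.intervalIntegrable_const (log_intInt'.const_mul k),
      intervalIntegral.integral_const, intervalIntegral.integral_const_mul,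
      even_int (fun x => Real.log_neg_eq_log x) log_intInt', int_log01]
    simp only [smul_eq_mul]
    push_cast
    ring
  · intro j hj
    have hja : (0:ℝ) < |(j : ℝ)| := by
      simp only [abs_pos, ne_eq, Int.cast_eq_zero]
      exact_mod_cast hj
    set a := |(j : ℝ)| * π with haa
    have ha : 0 < a := mul_pos hja Real.pi_pos
    have hjpi : ((j:ℝ) * π) ≠ 0 := by
      apply mul_ne_zero _ Real.pi_ne_zero
      exact_mod_cast hj
    -- pointwise rewrite
    have hptw : ∀ x : ℝ, ((c + k * Real.log x : ℝ) : ℂ) * Complex.exp (-((j:ℂ) * ↑π * Complex.I * ↑x))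
        = ((((c + k * Real.log x) * Real.cos ((j:ℝ)*π*x) : ℝ)) : ℂ)
          - ((((c + k * Real.log x) * Real.sin ((j:ℝ)*π*x) : ℝ)) : ℂ) * Complex.I := by
      intro x
      have h1 : -((j:ℂ) * ↑π * Complex.I * ↑x) = ((-(((j:ℝ))*π*x) : ℝ) : ℂ) * Complex.I := by
        push_cast; ring
      rw [h1, Complex.exp_mul_I, ← Complex.ofReal_cos, ← Complex.ofReal_sin,
        Real.cos_neg, Real.sin_neg]
      push_cast
      ring
    have hcosC : Continuous (fun x : ℝ => Real.cos ((j:ℝ)*π*x)) :=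
      Real.continuous_cos.comp (continuous_const.mul continuous_id)
    have hsinC : Continuous (fun x : ℝ => Real.sin ((j:ℝ)*π*x)) :=
      Real.continuous_sin.comp (continuous_const.mul continuous_id)
    -- integrability of real products
    have hint_fc : IntervalIntegrable (fun x => (c + k * Real.log x) * Real.cos ((j:ℝ)*π*x))
        volume (-1) 1 := hf_int.mul_continuousOn hcosC.continuousOn
    have hint_fs : IntervalIntegrable (fun x => (c + k * Real.log x) * Real.sin ((j:ℝ)*π*x))
        volume (-1) 1 := hf_int.mul_continuousOn hsinC.continuousOn
    rw [Fc]
    simp only [Real.log_abs]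
    rw [hIcc]
    have hsplit : ∫ x in (-1:ℝ)..1, ((c + k * Real.log x : ℝ) : ℂ) * Complex.exp (-((j:ℂ) * ↑π * Complex.I * ↑x))
        = ((∫ x in (-1:ℝ)..1, (c + k * Real.log x) * Real.cos ((j:ℝ)*π*x) : ℝ) : ℂ)
          - ((∫ x in (-1:ℝ)..1, (c + k * Real.log x) * Real.sin ((j:ℝ)*π*x) : ℝ) : ℂ) * Complex.I := by
      rw [intervalIntegral.integral_congr (fun x _ => hptw x),
        intervalIntegral.integral_sub hint_fc.ofReal' (hint_fs.ofReal'.mul_const Complex.I),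
        intervalIntegral.integral_mul_const, intervalIntegral.integral_ofReal,
        intervalIntegral.integral_ofReal]
    rw [hsplit]
    -- odd part vanishes
    have hOdd : ∫ x in (-1:ℝ)..1, (c + k * Real.log x) * Real.sin ((j:ℝ)*π*x) = 0 := by
      apply odd_int _ hint_fs
      intro x
      rw [Real.log_neg_eq_log, show (j:ℝ)*π*(-x) = -((j:ℝ)*π*x) by ring, Real.sin_neg]
      ring
    -- even part
    have hEven : ∫ x in (-1:ℝ)..1, (c + k * Real.log x) * Real.cos ((j:ℝ)*π*x)
        = 2 * ∫ x in (0:ℝ)..1, (c + k * Real.log x) * Real.cos ((j:ℝ)*π*x) := by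
      apply even_int _ hint_fc
      intro x
      rw [Real.log_neg_eq_log, show (j:ℝ)*π*(-x) = -((j:ℝ)*π*x) by ring, Real.cos_neg]
    rw [hOdd, hEven]
    -- split the 0..1 integral
    have hsplit2 : ∫ x in (0:ℝ)..1, (c + k * Real.log x) * Real.cos ((j:ℝ)*π*x)
        = c * (∫ x in (0:ℝ)..1, Real.cos ((j:ℝ)*π*x))
          + k * ∫ x in (0:ℝ)..1, Real.log x * Real.cos ((j:ℝ)*π*x) := by
      rw [← intervalIntegral.integral_const_mul, ← intervalIntegral.integral_const_mul,
        ← intervalIntegral.integral_add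
          ((Continuous.intervalIntegrable (u := fun x => c * Real.cos ((j:ℝ)*π*x)) (continuous_const.mul hcosC) _ _))
          ((log_intInt.mul_continuousOn hcosC.continuousOn).const_mul k)]
      apply intervalIntegral.integral_congr
      intro x _
      ring
    have hcos0 : ∫ x in (0:ℝ)..1, Real.cos ((j:ℝ)*π*x) = 0 := by
      rw [show (fun x : ℝ => Real.cos ((j:ℝ)*π*x)) = fun x => Real.cos (((j:ℝ)*π)*x) from rfl]
      rw [intervalIntegral.integral_comp_mul_left Real.cos hjpi]
      simp [integral_cos, Real.sin_int_mul_pi]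
    have hlogcos : ∫ x in (0:ℝ)..1, Real.log x * Real.cos ((j:ℝ)*π*x)
        = ∫ x in (0:ℝ)..1, Real.log x * Real.cos (a*x) := by
      apply intervalIntegral.integral_congr
      intro x hx
      rw [Set.uIcc_of_le (by norm_num : (0:ℝ) ≤ 1)] at hx
      show Real.log x * Real.cos ((j:ℝ)*π*x) = Real.log x * Real.cos (a*x)
      congr 1
      rw [haa, show |(j:ℝ)| * π * x = |(j:ℝ)*π*x| by
        rw [abs_mul, abs_mul, abs_of_nonneg Real.pi_pos.le, abs_of_nonneg hx.1],
        Real.cos_abs]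
    rw [hsplit2, hcos0, hlogcos, key_int ha]
    push_cast
    field_simp
    ring
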